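/- Let R be a commutative ring and a,d,e,f,g,h,i,j,k,m,n,p ∈ R. Define I_0 = −af^2g − d^2gk − adhk + dkm^2 + 2dfgn + dhn^2 − 2dmnp + adp^2. Then ag^2(dk − fn)^2 = −gn^2·I_0 + (−d^2g^2k + 2dfg^2n − dim^2n + dghn^2)(n^2 − ak) + (−dkm^2n + dmn^2p)(ai − gn) + (dmn^3 − adn^2p)(im − gp). In particular, ag^2(dk − fn)^2 lies in the ideal generated by I_0, n^2 − ak, ai − gn, and im − gp. -/
import Mathlib


/-- with
`I₀ = −af²g − d²gk − adhk + dkm² + 2dfgn + dhn² − 2dmnp + adp²`, the identity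
`ag²(dk − fn)² = −gn²·I₀ + (−d²g²k + 2dfg²n − dim²n + dghn²)(n² − ak)
+ (−dkm²n + dmn²p)(ai − gn) + (dmn³ − adn²p)(im − gp)` holds; in particular
`ag²(dk − fn)²` lies in the ideal `(I₀, n² − ak, ai − gn, im − gp)`. -/
theorem stmt_10 (R : Type*) [CommRing R] (a d e f g h i j k m n p : R) :
    a * g ^ 2 * (d * k - f * n) ^ 2 =
      -(g * n ^ 2) *
        (-(a * f ^ 2 * g) - d ^ 2 * g * k - a * d * h * k + d * k * m ^ 2
          + 2 * d * f * g * n + d * h * n ^ 2 - 2 * d * m * n * p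
          + a * d * p ^ 2) +
      (-(d ^ 2 * g ^ 2 * k) + 2 * d * f * g ^ 2 * n - d * i * m ^ 2 * n
          + d * g * h * n ^ 2) * (n ^ 2 - a * k) +
      (-(d * k * m ^ 2 * n) + d * m * n ^ 2 * p) * (a * i - g * n) +
      (d * m * n ^ 3 - a * d * n ^ 2 * p) * (i * m - g * p) ∧
    a * g ^ 2 * (d * k - f * n) ^ 2 ∈ Ideal.span
      {(-(a * f ^ 2 * g) - d ^ 2 * g * k - a * d * h * k + d * k * m ^ 2
          + 2 * d * f * g * n + d * h * n ^ 2 - 2 * d * m * n * p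
          + a * d * p ^ 2),
        n ^ 2 - a * k, a * i - g * n, i * m - g * p} := by
  constructor
  · ring
  · have h1 : (-(a * f ^ 2 * g) - d ^ 2 * g * k - a * d * h * k + d * k * m ^ 2
          + 2 * d * f * g * n + d * h * n ^ 2 - 2 * d * m * n * p
          + a * d * p ^ 2) ∈ Ideal.span
      {(-(a * f ^ 2 * g) - d ^ 2 * g * k - a * d * h * k + d * k * m ^ 2
          + 2 * d * f * g * n + d * h * n ^ 2 - 2 * d * m * n * p
          + a * d * p ^ 2),
        n ^ 2 - a * k, a * i - g * n, i * m - g * p} :=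
      Ideal.subset_span (by simp)
    have h2 : n ^ 2 - a * k ∈ Ideal.span
      {(-(a * f ^ 2 * g) - d ^ 2 * g * k - a * d * h * k + d * k * m ^ 2
          + 2 * d * f * g * n + d * h * n ^ 2 - 2 * d * m * n * p
          + a * d * p ^ 2),
        n ^ 2 - a * k, a * i - g * n, i * m - g * p} :=
      Ideal.subset_span (by simp)
    have h3 : a * i - g * n ∈ Ideal.span
      {(-(a * f ^ 2 * g) - d ^ 2 * g * k - a * d * h * k + d * k * m ^ 2
          + 2 * d * f * g * n + d * h * n ^ 2 - 2 * d * m * n * p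
          + a * d * p ^ 2),
        n ^ 2 - a * k, a * i - g * n, i * m - g * p} :=
      Ideal.subset_span (by simp)
    have h4 : i * m - g * p ∈ Ideal.span
      {(-(a * f ^ 2 * g) - d ^ 2 * g * k - a * d * h * k + d * k * m ^ 2
          + 2 * d * f * g * n + d * h * n ^ 2 - 2 * d * m * n * p
          + a * d * p ^ 2),
        n ^ 2 - a * k, a * i - g * n, i * m - g * p} :=
      Ideal.subset_span (by simp)
    have : a * g ^ 2 * (d * k - f * n) ^ 2 =
      -(g * n ^ 2) *
        (-(a * f ^ 2 * g) - d ^ 2 * g * k - a * d * h * k + d * k * m ^ 2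
          + 2 * d * f * g * n + d * h * n ^ 2 - 2 * d * m * n * p
          + a * d * p ^ 2) +
      (-(d ^ 2 * g ^ 2 * k) + 2 * d * f * g ^ 2 * n - d * i * m ^ 2 * n
          + d * g * h * n ^ 2) * (n ^ 2 - a * k) +
      (-(d * k * m ^ 2 * n) + d * m * n ^ 2 * p) * (a * i - g * n) +
      (d * m * n ^ 3 - a * d * n ^ 2 * p) * (i * m - g * p) := by ring
    rw [this]
    exact add_mem (add_mem (add_mem (Ideal.mul_mem_left _ _ h1)
      (Ideal.mul_mem_left _ _ h2)) (Ideal.mul_mem_left _ _ h3))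
      (Ideal.mul_mem_left _ _ h4)
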